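/- arXiv:1801.05696 — 2 statements merged into one kernel-verified Lean document; each statement's English description precedes it below -/
import Mathlib

section
/- Let f ∈ H¹(a,b) (absolutely continuous with square-integrable derivative) with f(a)=0 or f(b)=0, let α ∈ ℝ, and let W be a positive semidefinite n×n real matrix. Then ∫_a^b e^{2αt} f(t)ᵀ W f(t) dt ≤ e^{2|α|(b−a)} · (4(b−a)²/π²) · ∫_a^b e^{2αt} f'(t)ᵀ W f'(t) dt. -/
open MeasureTheory Real Set Matrix intervalIntegral

lemma sq_integral_le {a c : ℝ} (hac : a ≤ c) {g : ℝ → ℝ}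
    (hg : IntervalIntegrable g volume a c)
    (hg2 : IntervalIntegrable (fun t => g t ^ 2) volume a c) :
    (∫ t in a..c, g t) ^ 2 ≤ (c - a) * ∫ t in a..c, g t ^ 2 := by
  have hIoc : IntegrableOn g (Ioc a c) volume :=
    (intervalIntegrable_iff_integrableOn_Ioc_of_le hac).1 hg
  have hIoc2 : IntegrableOn (fun t => g t ^ 2) (Ioc a c) volume :=
    (intervalIntegrable_iff_integrableOn_Ioc_of_le hac).1 hg2
  set μ := volume.restrict (Ioc a c)
  have hconj : Real.HolderConjugate 2 2 := Real.HolderConjugate.two_two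
  have hmem1 : MemLp (fun _ : ℝ => (1:ℝ)) (ENNReal.ofReal 2) μ := by
    have : IsFiniteMeasure μ := by
      constructor
      simp [μ, Measure.restrict_apply, Real.volume_Ioc]
    simpa using memLp_const (μ := μ) (1:ℝ)
  have hmem2 : MemLp g (ENNReal.ofReal 2) μ := by
    have : (ENNReal.ofReal 2) = (2 : ENNReal) := by norm_num
    rw [this, memLp_two_iff_integrable_sq hIoc.aestronglyMeasurable]
    exact hIoc2
  have key := MeasureTheory.integral_mul_norm_le_Lp_mul_Lq (μ := μ) hconj hmem1 hmem2
  have h1 : ∫ t, ‖(1:ℝ)‖ * ‖g t‖ ∂μ = ∫ t, ‖g t‖ ∂μ := by simp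
  have h2 : ∫ t, ‖(1:ℝ)‖ ^ (2:ℝ) ∂μ = (c - a) := by
    simp [μ, Real.volume_Ioc, ENNReal.toReal_ofReal (sub_nonneg.2 hac), hac]
  have h3 : ∫ t, ‖g t‖ ^ (2:ℝ) ∂μ = ∫ t, g t ^ 2 ∂μ := by
    congr 1; funext t
    rw [show ((2:ℝ) : ℝ) = ((2:ℕ) : ℝ) by norm_num, Real.rpow_natCast]
    simp [sq_abs]
  rw [h1, h2, h3] at key
  have habs : |∫ t in a..c, g t| ≤ ∫ t, ‖g t‖ ∂μ := by
    rw [intervalIntegral.integral_of_le hac]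
    exact (norm_integral_le_integral_norm g)
  have hnn2 : 0 ≤ ∫ t, g t ^ 2 ∂μ := integral_nonneg fun t => sq_nonneg _
  have hca : (0:ℝ) ≤ c - a := sub_nonneg.2 hac
  have : (∫ t in a..c, g t) ^ 2 ≤ (∫ t, ‖g t‖ ∂μ) ^ 2 := by
    rw [← sq_abs]
    exact pow_le_pow_left₀ (abs_nonneg _) habs 2
  refine this.trans ?_
  have key2 : (∫ t, ‖g t‖ ∂μ) ^ 2 ≤ ((c - a) ^ ((1:ℝ)/2) * (∫ t, g t ^ 2 ∂μ) ^ ((1:ℝ)/2)) ^ 2 := by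
    apply pow_le_pow_left₀ (integral_nonneg fun t => norm_nonneg _) key
  refine key2.trans_eq ?_
  rw [mul_pow, ← Real.rpow_natCast ((c-a) ^ ((1:ℝ)/2)) 2, ← Real.rpow_natCast ((∫ t, g t ^ 2 ∂μ) ^ ((1:ℝ)/2)) 2,
    ← Real.rpow_mul hca, ← Real.rpow_mul hnn2]
  norm_num
  left
  rw [intervalIntegral.integral_of_le hac]

lemma wirtinger_scalar_left {a b : ℝ} (hab : a < b) {f f' : ℝ → ℝ}
    (hderiv : ∀ t ∈ Icc a b, HasDerivAt f (f' t) t)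
    (hi1 : IntervalIntegrable f' volume a b)
    (hi2 : IntervalIntegrable (fun t => f' t ^ 2) volume a b)
    (ha : f a = 0) :
    (Real.pi / (2 * (b - a))) ^ 2 * ∫ t in a..b, f t ^ 2 ≤ ∫ t in a..b, f' t ^ 2 := by
  have hL : (0:ℝ) < b - a := sub_pos.2 hab
  set k : ℝ := Real.pi / (2 * (b - a)) with hk
  have hkpos : 0 < k := div_pos Real.pi_pos (by linarith)
  have hkL : k * (b - a) = Real.pi / 2 := by rw [hk, div_mul_eq_mul_div, div_eq_div_iff (ne_of_gt (by linarith)) (by norm_num)]; ring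
  have fcont : ContinuousOn f (Icc a b) := fun t ht =>
    (hderiv t ht).continuousAt.continuousWithinAt
  have fsqcont : ContinuousOn (fun t => f t ^ 2) (Icc a b) := fcont.pow 2
  -- bound on f^2
  obtain ⟨M, hM⟩ : ∃ M, ∀ t ∈ Icc a b, f t ^ 2 ≤ M := by
    obtain ⟨M, hM'⟩ := isCompact_Icc.exists_bound_of_continuousOn fsqcont
    exact ⟨M, fun t ht => le_trans (le_abs_self _) (hM' t ht)⟩
  have hM0 : 0 ≤ M := le_trans (by positivity) (hM a (by constructor <;> linarith))
  -- the key inequality for c ∈ Ioo a b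
  have key : ∀ c ∈ Ioo a b, k ^ 2 * ∫ t in c..b, f t ^ 2 ≤ ∫ t in a..b, f' t ^ 2 := by
    intro c hc
    set φ : ℝ → ℝ := fun t => k * Real.tan (k * (b - t)) with hφ
    have hangle : ∀ t ∈ Icc c b, k * (b - t) ∈ Ico 0 (Real.pi/2) := by
      intro t ht
      constructor
      · have : 0 ≤ b - t := by linarith [ht.2]
        positivity
      · have : k * (b - t) < k * (b - a) := by
          apply mul_lt_mul_of_pos_left _ hkpos
          linarith [ht.1, hc.1]
        linarith [hkL ▸ this]
    have hcos : ∀ t ∈ Icc c b, 0 < Real.cos (k * (b - t)) := by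
      intro t ht
      apply Real.cos_pos_of_mem_Ioo
      have := hangle t ht
      constructor
      · linarith [this.1, Real.pi_pos]
      · exact this.2
    have hφderiv : ∀ t ∈ Icc c b, HasDerivAt φ (-(k^2 + φ t ^2)) t := by
      intro t ht
      have hc0 := (hcos t ht).ne'
      have h1 : HasDerivAt (fun s => k * (b - s)) (-k) t := by
        simpa using ((hasDerivAt_id t).const_sub b).const_mul k
      have h2 : HasDerivAt (fun s => Real.tan (k * (b - s)))
          ((1 / Real.cos (k*(b-t)) ^ 2) * (-k)) t :=
        by have := (Real.hasDerivAt_tan hc0).comp t h1; exact this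
      have h3 := h2.const_mul k
      refine h3.congr_deriv ?_
      have := Real.inv_one_add_tan_sq hc0
      have hcos2 : (1:ℝ) / Real.cos (k*(b-t)) ^ 2 = 1 + Real.tan (k*(b-t)) ^ 2 := by
        rw [one_div, ← this, inv_inv]
      rw [hcos2]; simp only [hφ]; ring
    have hφcont : ContinuousOn φ (Icc c b) := fun t ht =>
      ((hφderiv t ht).continuousAt).continuousWithinAt
    have hIccsub : Icc c b ⊆ Icc a b := Icc_subset_Icc hc.1.le le_rfl
    have hfc : ContinuousOn f (Icc c b) := fcont.mono hIccsub
    -- F = φ * f^2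
    set F : ℝ → ℝ := fun t => φ t * f t ^ 2 with hF
    have hFderiv : ∀ t ∈ Icc c b, HasDerivAt F
        (-(k^2 + φ t ^2) * f t ^ 2 + φ t * (2 * f t * f' t)) t := by
      intro t ht
      have h1 := hφderiv t ht
      have h2 : HasDerivAt (fun s => f s ^ 2) (2 * f t * f' t) t := by
        have := (hderiv t (hIccsub ht))
        simpa [mul_comm, mul_assoc] using (this.fun_pow 2)
      simpa using h1.fun_mul h2
    have hFcont : ContinuousOn F (Icc c b) := fun t ht =>
      ((hFderiv t ht).continuousAt).continuousWithinAt
    have hint2cb : IntervalIntegrable (fun t => f' t ^ 2) volume c b :=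
      hi2.mono_set (by rw [uIcc_of_le hc.2.le, uIcc_of_le hab.le]; exact Icc_subset_Icc hc.1.le le_rfl)
    have hintf2 : IntervalIntegrable (fun t => f t ^ 2) volume c b :=
      ContinuousOn.intervalIntegrable (by rw [uIcc_of_le hc.2.le]; exact fsqcont.mono hIccsub)
    have hφint : IntegrableOn (fun t => f' t ^ 2 - k^2 * f t ^ 2) (Icc c b) volume := by
      rw [integrableOn_Icc_iff_integrableOn_Ioc]
      apply Integrable.sub
      · exact (intervalIntegrable_iff_integrableOn_Ioc_of_le hc.2.le).1 hint2cb
      · exact ((intervalIntegrable_iff_integrableOn_Ioc_of_le hc.2.le).1 hintf2).const_mul _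
    have main : F b - F c ≤ ∫ t in c..b, (f' t ^ 2 - k^2 * f t ^ 2) := by
      apply sub_le_integral_of_hasDeriv_right_of_le (hc.2.le) hFcont
        (fun x hx => ((hFderiv x (Ioo_subset_Icc_self hx)).hasDerivWithinAt)) hφint
      intro x hx
      nlinarith [sq_nonneg (f' x - φ x * f x)]
    have hFb : F b = 0 := by simp [hF, hφ]
    have hsplit : ∫ t in c..b, (f' t ^ 2 - k^2 * f t ^ 2)
        = (∫ t in c..b, f' t ^ 2) - k^2 * ∫ t in c..b, f t ^ 2 := by
      rw [intervalIntegral.integral_sub hint2cb (hintf2.const_mul _)]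
      simp [intervalIntegral.integral_const_mul]
    rw [hFb, hsplit] at main
    -- bound F c = φ c * f c ^ 2
    have hfc_eq : f c = ∫ t in a..c, f' t := by
      rw [intervalIntegral.integral_eq_sub_of_hasDerivAt
        (fun t ht => hderiv t (by rw [uIcc_of_le hc.1.le] at ht; exact ⟨ht.1, ht.2.trans hc.2.le⟩))
        (hi1.mono_set (by rw [uIcc_of_le hc.1.le, uIcc_of_le hab.le]; exact Icc_subset_Icc le_rfl hc.2.le))]
      rw [ha]; ring
    have hi1ac : IntervalIntegrable f' volume a c :=
      hi1.mono_set (by rw [uIcc_of_le hc.1.le, uIcc_of_le hab.le]; exact Icc_subset_Icc le_rfl hc.2.le)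
    have hi2ac : IntervalIntegrable (fun t => f' t ^ 2) volume a c :=
      hi2.mono_set (by rw [uIcc_of_le hc.1.le, uIcc_of_le hab.le]; exact Icc_subset_Icc le_rfl hc.2.le)
    have hCS : f c ^ 2 ≤ (c - a) * ∫ t in a..c, f' t ^ 2 := by
      rw [hfc_eq]; exact sq_integral_le hc.1.le hi1ac hi2ac
    have hφc_le : φ c ≤ 1 / (c - a) := by
      have hy : k * (c - a) ∈ Ioo 0 (Real.pi/2) := by
        constructor
        · have : 0 < c - a := by linarith [hc.1]
          positivity
        · have : k * (c - a) < k * (b - a) := by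
            apply mul_lt_mul_of_pos_left _ hkpos; linarith [hc.2]
          linarith [hkL ▸ this]
      have harg : k * (b - c) = Real.pi/2 - k * (c - a) := by
        rw [← hkL]; ring
      have htan : Real.tan (k * (b - c)) = (Real.tan (k * (c-a)))⁻¹ := by
        rw [harg, Real.tan_pi_div_two_sub]
      have hlt : k * (c - a) < Real.tan (k * (c - a)) := Real.lt_tan hy.1 hy.2
      have htpos : 0 < Real.tan (k * (c - a)) := lt_trans hy.1 hlt
      rw [hφ]
      simp only [htan]
      calc k * (Real.tan (k*(c-a)))⁻¹ ≤ k * (k * (c-a))⁻¹ :=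
            mul_le_mul_of_nonneg_left (inv_anti₀ hy.1 hlt.le) hkpos.le
        _ = 1 / (c - a) := by
            rw [mul_inv, ← mul_assoc, mul_inv_cancel₀ hkpos.ne', one_mul, one_div]
    have hφc_nonneg : 0 ≤ φ c := by
      have := hangle c ⟨le_rfl, hc.2.le⟩
      exact mul_nonneg hkpos.le (Real.tan_nonneg_of_nonneg_of_le_pi_div_two this.1 this.2.le)
    have hFc_le : F c ≤ ∫ t in a..c, f' t ^ 2 := by
      have h1 : F c ≤ (1/(c-a)) * f c ^ 2 :=
        mul_le_mul_of_nonneg_right hφc_le (sq_nonneg _)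
      refine h1.trans ?_
      have hca : 0 < c - a := by linarith [hc.1]
      calc (1/(c-a)) * f c ^ 2 ≤ (1/(c-a)) * ((c-a) * ∫ t in a..c, f' t ^ 2) := by
            apply mul_le_mul_of_nonneg_left hCS (by positivity)
        _ = ∫ t in a..c, f' t ^ 2 := by field_simp
    -- combine: k^2 ∫_c^b f^2 ≤ ∫_c^b f'^2 + F c ≤ ∫_c^b f'^2 + ∫_a^c f'^2 = ∫_a^b f'^2
    have hsum : (∫ t in a..c, f' t ^ 2) + ∫ t in c..b, f' t ^ 2 = ∫ t in a..b, f' t ^ 2 :=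
      intervalIntegral.integral_add_adjacent_intervals hi2ac hint2cb
    linarith [main, hFc_le]
  -- pass to the limit c → a⁺
  have hfin : ∀ ε > 0, k ^ 2 * ∫ t in a..b, f t ^ 2 ≤ (∫ t in a..b, f' t ^ 2) + ε := by
    intro ε hε
    set δ : ℝ := min (ε / (k^2 * (M+1))) ((b-a)/2) with hδ
    have hδpos : 0 < δ := by
      apply lt_min
      · positivity
      · linarith
    set c : ℝ := a + δ with hc
    have hcmem : c ∈ Ioo a b := by
      constructor
      · simp [hc]; linarith
      · have : δ ≤ (b-a)/2 := min_le_right _ _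
        simp [hc]; linarith
    have hkey := key c hcmem
    have hsplitf : (∫ t in a..c, f t ^ 2) + ∫ t in c..b, f t ^ 2 = ∫ t in a..b, f t ^ 2 := by
      apply intervalIntegral.integral_add_adjacent_intervals
      · exact ContinuousOn.intervalIntegrable
          (by rw [uIcc_of_le hcmem.1.le]; exact fsqcont.mono (Icc_subset_Icc le_rfl hcmem.2.le))
      · exact ContinuousOn.intervalIntegrable
          (by rw [uIcc_of_le hcmem.2.le]; exact fsqcont.mono (Icc_subset_Icc hcmem.1.le le_rfl))
    have hac_bound : ∫ t in a..c, f t ^ 2 ≤ M * δ := by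
      have : ∫ t in a..c, f t ^ 2 ≤ ∫ t in a..c, M := by
        apply intervalIntegral.integral_mono_on hcmem.1.le
          (ContinuousOn.intervalIntegrable
            (by rw [uIcc_of_le hcmem.1.le]; exact fsqcont.mono (Icc_subset_Icc le_rfl hcmem.2.le)))
          intervalIntegrable_const
        intro x hx
        exact hM x ⟨hx.1, hx.2.trans hcmem.2.le⟩
      simpa [hc, mul_comm] using this
    have hδ_small : k^2 * (M * δ) ≤ ε := by
      have h1 : δ ≤ ε / (k^2 * (M+1)) := min_le_left _ _
      have h2 : k^2 * (M+1) > 0 := by positivity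
      calc k^2 * (M * δ) ≤ k^2 * ((M+1) * δ) := by nlinarith
        _ ≤ k^2 * ((M+1) * (ε / (k^2 * (M+1)))) := by
            apply mul_le_mul_of_nonneg_left _ (by positivity)
            apply mul_le_mul_of_nonneg_left h1 (by linarith)
        _ = ε := by field_simp
    nlinarith [hkey, hsplitf, hac_bound, hδ_small, sq_nonneg k]
  -- conclude
  by_contra hcon
  push_neg at hcon
  obtain ⟨ε, hε⟩ : ∃ ε > 0, (∫ t in a..b, f' t ^ 2) + ε < k ^ 2 * ∫ t in a..b, f t ^ 2 := by
    refine ⟨(k ^ 2 * (∫ t in a..b, f t ^ 2) - ∫ t in a..b, f' t ^ 2)/2, by linarith, by linarith⟩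
  linarith [hfin ε hε.1, hε.2]

lemma wirtinger_scalar {a b : ℝ} (hab : a < b) {f f' : ℝ → ℝ}
    (hderiv : ∀ t ∈ Icc a b, HasDerivAt f (f' t) t)
    (hi1 : IntervalIntegrable f' volume a b)
    (hi2 : IntervalIntegrable (fun t => f' t ^ 2) volume a b)
    (hbc : f a = 0 ∨ f b = 0) :
    (Real.pi / (2 * (b - a))) ^ 2 * ∫ t in a..b, f t ^ 2 ≤ ∫ t in a..b, f' t ^ 2 := by
  rcases hbc with ha | hb
  · exact wirtinger_scalar_left hab hderiv hi1 hi2 ha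
  · -- reflect
    set g : ℝ → ℝ := fun t => f (a + b - t) with hg
    set g' : ℝ → ℝ := fun t => -(f' (a + b - t)) with hg'
    have hmem : ∀ t ∈ Icc a b, a + b - t ∈ Icc a b := by
      intro t ht; exact ⟨by linarith [ht.2], by linarith [ht.1]⟩
    have hgderiv : ∀ t ∈ Icc a b, HasDerivAt g (g' t) t := by
      intro t ht
      have h1 : HasDerivAt (fun s => a + b - s) (-1) t := by
        simpa using ((hasDerivAt_id t).const_sub (a + b))
      have h2 := (hderiv _ (hmem t ht)).comp t h1
      simpa [hg, hg', mul_comm, Function.comp_def] using h2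
    have hgi1 : IntervalIntegrable g' volume a b := by
      have := (hi1.comp_sub_left (a + b)).neg
      simpa [show a + b - b = a by ring, show a + b - a = b by ring, hg', Pi.neg_def] using this.symm
    have hgi2 : IntervalIntegrable (fun t => g' t ^ 2) volume a b := by
      have := hi2.comp_sub_left (a + b)
      have h2 : IntervalIntegrable (fun x => f' (a + b - x) ^ 2) volume (a+b-a) (a+b-b) := this
      have h3 := h2.symm
      simp only [show a + b - b = a by ring, show a + b - a = b by ring] at h3
      apply h3.congr_ae
      filter_upwards with x
      simp [hg']
    have hga : g a = 0 := by simp [hg, show a + b - a = b by ring, hb]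
    have H := wirtinger_scalar_left hab hgderiv hgi1 hgi2 hga
    have e1 : ∫ t in a..b, g t ^ 2 = ∫ t in a..b, f t ^ 2 := by
      have := intervalIntegral.integral_comp_sub_left (fun t => f t ^ 2) (a + b) (a := a) (b := b)
      simp only [show a + b - b = a by ring, show a + b - a = b by ring] at this
      simpa [hg] using this
    have e2 : ∫ t in a..b, g' t ^ 2 = ∫ t in a..b, f' t ^ 2 := by
      have := intervalIntegral.integral_comp_sub_left (fun t => f' t ^ 2) (a + b) (a := a) (b := b)
      simp only [show a + b - b = a by ring, show a + b - a = b by ring] at this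
      rw [← this]
      congr 1; funext t; simp [hg']
    rw [e1, e2] at H
    exact H

-- unweighted vector Wirtinger
lemma wirtinger_vector {n : ℕ} {a b : ℝ} (hab : a < b)
    {f f' : ℝ → Fin n → ℝ} {W : Matrix (Fin n) (Fin n) ℝ} (hW : W.PosSemidef)
    (hderiv : ∀ t ∈ Icc a b, HasDerivAt f (f' t) t)
    (hq' : IntervalIntegrable (fun t => f' t ⬝ᵥ W *ᵥ f' t) volume a b)
    (hbc : f a = 0 ∨ f b = 0) :
    ∫ t in a..b, f t ⬝ᵥ W *ᵥ f t ≤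
      (4 * (b - a) ^ 2 / Real.pi ^ 2) * ∫ t in a..b, f' t ⬝ᵥ W *ᵥ f' t := by
  classical
  obtain ⟨S, hSW⟩ : ∃ S : Matrix (Fin n) (Fin n) ℝ, W = Sᴴ * S := by
    open scoped MatrixOrder in
    exact CStarAlgebra.nonneg_iff_eq_star_mul_self.mp hW.nonneg
  have quad : ∀ x : Fin n → ℝ, x ⬝ᵥ W *ᵥ x = ∑ i, (S *ᵥ x) i ^ 2 := by
    intro x
    have h1 : x ⬝ᵥ W *ᵥ x = (S *ᵥ x) ⬝ᵥ (S *ᵥ x) := by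
      rw [hSW, ← mulVec_mulVec, dotProduct_mulVec, conjTranspose_eq_transpose_of_trivial, ← mulVec_transpose, transpose_transpose]
    rw [h1, dotProduct]
    congr 1; funext i; ring
  set g : Fin n → ℝ → ℝ := fun i t => (S *ᵥ f t) i with hg
  set gd : Fin n → ℝ → ℝ := fun i t => (S *ᵥ f' t) i with hgd
  have hgderiv : ∀ i, ∀ t ∈ Icc a b, HasDerivAt (g i) (gd i t) t := by
    intro i t ht
    have hcomp : ∀ j, HasDerivAt (fun s => f s j) (f' t j) t :=
      fun j => hasDerivAt_pi.mp (hderiv t ht) j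
    have : HasDerivAt (fun s => ∑ j, S i j * f s j) (∑ j, S i j * f' t j) t :=
      HasDerivAt.fun_sum (fun j _ => (hcomp j).const_mul (S i j))
    simpa [hg, hgd, Matrix.mulVec, dotProduct] using this
  -- measurability of gd i on the interval
  have hgd_meas : ∀ i, AEStronglyMeasurable (fun t => gd i t) (volume.restrict (Ioc a b)) := by
    intro i
    have hm : Measurable (fun t => ∑ j, S i j * (deriv f t) j) := by
      apply Finset.measurable_sum
      intro j _
      exact (measurable_const.mul ((measurable_pi_apply j).comp (measurable_deriv f)))
    apply (hm.aestronglyMeasurable).congr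
    rw [Filter.EventuallyEq, ae_restrict_iff' measurableSet_Ioc]
    apply ae_of_all
    intro t ht
    have : deriv f t = f' t := (hderiv t ⟨ht.1.le, ht.2⟩).deriv
    simp [hgd, this, Matrix.mulVec, dotProduct]
  have hq'Ioc : IntegrableOn (fun t => f' t ⬝ᵥ W *ᵥ f' t) (Ioc a b) volume :=
    (intervalIntegrable_iff_integrableOn_Ioc_of_le hab.le).1 hq'
  have hgd_sq_int : ∀ i, IntervalIntegrable (fun t => gd i t ^ 2) volume a b := by
    intro i
    rw [intervalIntegrable_iff_integrableOn_Ioc_of_le hab.le]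
    apply hq'Ioc.mono' ((hgd_meas i).pow 2)
    apply ae_of_all
    intro t
    rw [Real.norm_eq_abs, abs_of_nonneg (sq_nonneg _), quad (f' t)]
    exact Finset.single_le_sum (fun j _ => sq_nonneg ((S *ᵥ f' t) j)) (Finset.mem_univ i)
  have hgd_int : ∀ i, IntervalIntegrable (fun t => gd i t) volume a b := by
    intro i
    rw [intervalIntegrable_iff_integrableOn_Ioc_of_le hab.le]
    have hbound : IntegrableOn (fun t => (1 + f' t ⬝ᵥ W *ᵥ f' t) / 2) (Ioc a b) volume :=
      ((integrableOn_const measure_Ioc_lt_top.ne).add hq'Ioc).div_const 2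
    apply hbound.mono' (hgd_meas i)
    apply ae_of_all
    intro t
    rw [Real.norm_eq_abs]
    have h1 : gd i t ^ 2 ≤ f' t ⬝ᵥ W *ᵥ f' t := by
      rw [quad (f' t)]
      exact Finset.single_le_sum (fun j _ => sq_nonneg ((S *ᵥ f' t) j)) (Finset.mem_univ i)
    nlinarith [sq_nonneg (|gd i t| - 1), sq_abs (gd i t), abs_nonneg (gd i t)]
  have hbc' : ∀ i, g i a = 0 ∨ g i b = 0 := by
    rcases hbc with h | h
    · exact fun i => Or.inl (by simp [hg, h])
    · exact fun i => Or.inr (by simp [hg, h])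
  have hW_each : ∀ i, (Real.pi / (2 * (b - a))) ^ 2 * ∫ t in a..b, g i t ^ 2
      ≤ ∫ t in a..b, gd i t ^ 2 :=
    fun i => wirtinger_scalar hab (hgderiv i) (hgd_int i) (hgd_sq_int i) (hbc' i)
  -- sum up
  have hgcont : ∀ i, ContinuousOn (fun t => g i t ^ 2) (Icc a b) := by
    intro i
    exact fun t ht => (((hgderiv i t ht).continuousAt).continuousWithinAt).pow 2
  have hg_int : ∀ i, IntervalIntegrable (fun t => g i t ^ 2) volume a b := by
    intro i
    exact ContinuousOn.intervalIntegrable (by rw [uIcc_of_le hab.le]; exact hgcont i)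
  have e1 : ∫ t in a..b, f t ⬝ᵥ W *ᵥ f t = ∑ i, ∫ t in a..b, g i t ^ 2 := by
    rw [← intervalIntegral.integral_finset_sum (fun i _ => hg_int i)]
    congr 1; funext t; rw [quad (f t)]
  have e2 : ∫ t in a..b, f' t ⬝ᵥ W *ᵥ f' t = ∑ i, ∫ t in a..b, gd i t ^ 2 := by
    rw [← intervalIntegral.integral_finset_sum (fun i _ => hgd_sq_int i)]
    congr 1; funext t; rw [quad (f' t)]
  have hk2 : (0:ℝ) < (Real.pi / (2 * (b - a))) ^ 2 := by
    have : (0:ℝ) < b - a := by linarith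
    positivity
  have hsum : (Real.pi / (2 * (b - a))) ^ 2 * ∫ t in a..b, f t ⬝ᵥ W *ᵥ f t
      ≤ ∫ t in a..b, f' t ⬝ᵥ W *ᵥ f' t := by
    rw [e1, e2, Finset.mul_sum]
    exact Finset.sum_le_sum fun i _ => hW_each i
  have hconst : 4 * (b - a) ^ 2 / Real.pi ^ 2 = ((Real.pi / (2 * (b - a))) ^ 2)⁻¹ := by
    have hπ := Real.pi_ne_zero
    have : b - a ≠ 0 := by intro h; linarith [sub_pos.2 hab]
    field_simp
    ring
  rw [hconst, ← div_eq_inv_mul, le_div_iff₀ hk2, mul_comm]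
  exact hsum

/-- Exponential Wirtinger inequality (vector case). -/
theorem exp_wirtinger_vector {n : ℕ} (a b α : ℝ) (hab : a < b)
    (f f' : ℝ → Fin n → ℝ) (W : Matrix (Fin n) (Fin n) ℝ)
    (hW : W.PosSemidef)
    (hderiv : ∀ t ∈ Set.Icc a b, HasDerivAt f (f' t) t)
    (hf' : IntervalIntegrable (fun t => Real.exp (2 * α * t) * (f' t ⬝ᵥ W *ᵥ f' t))
      volume a b)
    (hf : IntervalIntegrable (fun t => Real.exp (2 * α * t) * (f t ⬝ᵥ W *ᵥ f t))
      volume a b)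
    (hbc : f a = 0 ∨ f b = 0) :
    ∫ t in a..b, Real.exp (2 * α * t) * (f t ⬝ᵥ W *ᵥ f t) ≤
      Real.exp (2 * |α| * (b - a)) * (4 * (b - a) ^ 2 / Real.pi ^ 2) *
        ∫ t in a..b, Real.exp (2 * α * t) * (f' t ⬝ᵥ W *ᵥ f' t) := by
  have hqnn : ∀ x : Fin n → ℝ, 0 ≤ x ⬝ᵥ W *ᵥ x := by
    intro x
    have := hW.dotProduct_mulVec_nonneg x
    simpa using this
  -- unweighted integrability of q'
  have hq' : IntervalIntegrable (fun t => f' t ⬝ᵥ W *ᵥ f' t) volume a b := by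
    have h := hf'.mul_continuousOn (g := fun t => Real.exp (-(2 * α * t)))
      (Continuous.continuousOn (by continuity))
    apply h.congr_ae
    filter_upwards with t
    rw [mul_comm (Real.exp (2*α*t)) _, mul_assoc, ← Real.exp_add]
    simp
  have fcont : ContinuousOn f (Icc a b) := fun t ht =>
    (hderiv t ht).continuousAt.continuousWithinAt
  have hcomp : ∀ i, ContinuousOn (fun t => f t i) (Icc a b) :=
    fun i => (continuous_apply i).comp_continuousOn fcont
  have hqcont : ContinuousOn (fun t => f t ⬝ᵥ W *ᵥ f t) (Icc a b) := by
    simp only [dotProduct, Matrix.mulVec]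
    apply continuousOn_finset_sum
    intro i _
    exact (hcomp i).mul (continuousOn_finset_sum _ (fun j _ => continuousOn_const.mul (hcomp j)))
  have hq : IntervalIntegrable (fun t => f t ⬝ᵥ W *ᵥ f t) volume a b :=
    ContinuousOn.intervalIntegrable (by rw [uIcc_of_le hab.le]; exact hqcont)
  have hkey := wirtinger_vector hab hW hderiv hq' hbc
  -- min and max of the weight
  set m : ℝ := min (Real.exp (2 * α * a)) (Real.exp (2 * α * b)) with hm
  set M : ℝ := max (Real.exp (2 * α * a)) (Real.exp (2 * α * b)) with hM
  have hmpos : 0 < m := lt_min (Real.exp_pos _) (Real.exp_pos _)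
  have hMpos : 0 < M := lt_of_lt_of_le hmpos (min_le_max)
  have hweight_le : ∀ t ∈ Icc a b, Real.exp (2 * α * t) ≤ M := by
    intro t ht
    rcases le_total 0 α with hα | hα
    · refine le_trans ?_ (le_max_right _ _)
      exact Real.exp_le_exp.2 (by nlinarith [ht.2])
    · refine le_trans ?_ (le_max_left _ _)
      exact Real.exp_le_exp.2 (by nlinarith [ht.1])
  have hweight_ge : ∀ t ∈ Icc a b, m ≤ Real.exp (2 * α * t) := by
    intro t ht
    rcases le_total 0 α with hα | hα
    · refine le_trans (min_le_left _ _) ?_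
      exact Real.exp_le_exp.2 (by nlinarith [ht.1])
    · refine le_trans (min_le_right _ _) ?_
      exact Real.exp_le_exp.2 (by nlinarith [ht.2])
  have hMm : M = Real.exp (2 * |α| * (b - a)) * m := by
    rcases le_total 0 α with hα | hα
    · have h1 : 2 * α * a ≤ 2 * α * b := by nlinarith
      rw [hM, hm, max_eq_right (Real.exp_le_exp.2 h1), min_eq_left (Real.exp_le_exp.2 h1),
        abs_of_nonneg hα, ← Real.exp_add]
      congr 1; ring
    · have h1 : 2 * α * b ≤ 2 * α * a := by nlinarith
      rw [hM, hm, max_eq_left (Real.exp_le_exp.2 h1), min_eq_right (Real.exp_le_exp.2 h1),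
        abs_of_nonpos hα, ← Real.exp_add]
      congr 1; ring
  -- chain
  have step1 : ∫ t in a..b, Real.exp (2 * α * t) * (f t ⬝ᵥ W *ᵥ f t)
      ≤ M * ∫ t in a..b, f t ⬝ᵥ W *ᵥ f t := by
    rw [← intervalIntegral.integral_const_mul]
    apply intervalIntegral.integral_mono_on hab.le hf (hq.const_mul M)
    intro t ht
    exact mul_le_mul_of_nonneg_right (hweight_le t ht) (hqnn _)
  have step2 : M * ∫ t in a..b, f t ⬝ᵥ W *ᵥ f t
      ≤ M * ((4 * (b - a) ^ 2 / Real.pi ^ 2) * ∫ t in a..b, f' t ⬝ᵥ W *ᵥ f' t) :=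
    mul_le_mul_of_nonneg_left hkey hMpos.le
  have step3 : m * ∫ t in a..b, f' t ⬝ᵥ W *ᵥ f' t
      ≤ ∫ t in a..b, Real.exp (2 * α * t) * (f' t ⬝ᵥ W *ᵥ f' t) := by
    rw [← intervalIntegral.integral_const_mul]
    apply intervalIntegral.integral_mono_on hab.le (hq'.const_mul m) hf'
    intro t ht
    exact mul_le_mul_of_nonneg_right (hweight_ge t ht) (hqnn _)
  have hC : (0:ℝ) ≤ 4 * (b - a) ^ 2 / Real.pi ^ 2 := by positivity
  have hE : (0:ℝ) < Real.exp (2 * |α| * (b - a)) := Real.exp_pos _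
  calc ∫ t in a..b, Real.exp (2 * α * t) * (f t ⬝ᵥ W *ᵥ f t)
      ≤ M * ((4 * (b - a) ^ 2 / Real.pi ^ 2) * ∫ t in a..b, f' t ⬝ᵥ W *ᵥ f' t) :=
        step1.trans step2
    _ = Real.exp (2 * |α| * (b - a)) * (4 * (b - a) ^ 2 / Real.pi ^ 2) *
          (m * ∫ t in a..b, f' t ⬝ᵥ W *ᵥ f' t) := by rw [hMm]; ring
    _ ≤ Real.exp (2 * |α| * (b - a)) * (4 * (b - a) ^ 2 / Real.pi ^ 2) *
          ∫ t in a..b, Real.exp (2 * α * t) * (f' t ⬝ᵥ W *ᵥ f' t) := by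
        apply mul_le_mul_of_nonneg_left step3 (by positivity)
end

section
/- Consider the scalar special case of Wirtinger's exponential inequality: if f : [a,b] → ℝ is continuously differentiable with f(a) = 0, then for any α ∈ ℝ, ∫_a^b e^{2αt} f(t)² dt ≤ e^{2|α|(b−a)} (4(b−a)²/π²) ∫_a^b e^{2αt} f'(t)² dt. -/
open Real Set intervalIntegral Filter Topology

set_option maxHeartbeats 1000000

private lemma key_eps (a b ω M ε : ℝ) (hab : a < b) (hω : 0 < ω)
    (hωL : ω * (b - a) = Real.pi / 2) (hM : 0 ≤ M)
    (f f' : ℝ → ℝ)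
    (hderiv : ∀ t ∈ Set.Icc a b, HasDerivAt f (f' t) t)
    (hf' : ContinuousOn f' (Set.Icc a b))
    (hcf : ContinuousOn f (Set.Icc a b))
    (hfb : ∀ t ∈ Set.Icc a b, |f t| ≤ M * (t - a))
    (hε : ε ∈ Set.Ioo (0:ℝ) (b - a)) :
    ω ^ 2 * ∫ t in a..b, (f t) ^ 2 ≤
      (∫ t in a..b, (f' t) ^ 2) + (M ^ 2 + ω ^ 2 * M ^ 2 * (b - a) ^ 2) * ε := by
  obtain ⟨hε0, hεL⟩ := hε
  have hac : a < a + ε := by linarith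
  have hcb : a + ε < b := by linarith
  set g : ℝ → ℝ := fun t => ω * (Real.cos (ω * (t - a)) / Real.sin (ω * (t - a))) with hgdef
  have hsinpos : ∀ t ∈ Icc (a + ε) b, 0 < Real.sin (ω * (t - a)) := by
    intro t ht
    apply Real.sin_pos_of_pos_of_lt_pi
    · exact mul_pos hω (by linarith [ht.1])
    · have h1 : ω * (t - a) ≤ ω * (b - a) := by
        apply mul_le_mul_of_nonneg_left _ hω.le
        linarith [ht.2]
      have := Real.pi_pos
      rw [hωL] at h1
      linarith
  have hg : ∀ t ∈ Icc (a + ε) b,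
      HasDerivAt g (-(ω ^ 2 / Real.sin (ω * (t - a)) ^ 2)) t := by
    intro t ht
    have hs := hsinpos t ht
    have hu : HasDerivAt (fun t : ℝ => ω * (t - a)) ω t := by
      simpa using ((hasDerivAt_id t).sub_const a).const_mul ω
    have hdiv := ((hu.cos).div (hu.sin) hs.ne').const_mul ω
    refine hdiv.congr_deriv ?_
    symm
    have hpyth := Real.sin_sq_add_cos_sq (ω * (t - a))
    field_simp
    linear_combination hpyth
  have hF : ∀ t ∈ Icc (a + ε) b,
      HasDerivAt (fun t => (f t) ^ 2 * g t)
        ((f' t) ^ 2 - ω ^ 2 * (f t) ^ 2 - (f' t - f t * g t) ^ 2) t := by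
    intro t ht
    have htab : t ∈ Icc a b := ⟨by linarith [ht.1], ht.2⟩
    have h1 := ((hderiv t htab).pow 2).mul (hg t ht)
    refine h1.congr_deriv ?_
    symm
    have hs := hsinpos t ht
    have hpyth := Real.sin_sq_add_cos_sq (ω * (t - a))
    simp only [hgdef, Pi.pow_apply]
    field_simp
    linear_combination (-(ω ^ 2 * f t ^ 2)) * hpyth
  have hsubcb : Icc (a + ε) b ⊆ Icc a b := Icc_subset_Icc hac.le le_rfl
  have hgc : ContinuousOn g (Icc (a + ε) b) := by
    apply continuousOn_const.mul
    apply ContinuousOn.div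
    · exact (Real.continuous_cos.comp
        (continuous_const.mul (continuous_id.sub continuous_const))).continuousOn
    · exact (Real.continuous_sin.comp
        (continuous_const.mul (continuous_id.sub continuous_const))).continuousOn
    · exact fun t ht => (hsinpos t ht).ne'
  have hfcont : ContinuousOn f (Icc (a + ε) b) := hcf.mono hsubcb
  have hf'cont : ContinuousOn f' (Icc (a + ε) b) := hf'.mono hsubcb
  have hint1 : IntervalIntegrable (fun t => (f' t) ^ 2) MeasureTheory.volume (a + ε) b := by
    apply ContinuousOn.intervalIntegrable; rw [uIcc_of_le hcb.le]; exact hf'cont.pow 2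
  have hint2 : IntervalIntegrable (fun t => (f t) ^ 2) MeasureTheory.volume (a + ε) b := by
    apply ContinuousOn.intervalIntegrable; rw [uIcc_of_le hcb.le]; exact hfcont.pow 2
  have hint3 : IntervalIntegrable (fun t => (f' t - f t * g t) ^ 2)
      MeasureTheory.volume (a + ε) b := by
    apply ContinuousOn.intervalIntegrable; rw [uIcc_of_le hcb.le]
    exact (hf'cont.sub (hfcont.mul hgc)).pow 2
  have hftc2 : ∫ t in (a + ε)..b, ((f' t) ^ 2 - ω ^ 2 * (f t) ^ 2 - (f' t - f t * g t) ^ 2)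
      = (f b) ^ 2 * g b - (f (a + ε)) ^ 2 * g (a + ε) := by
    apply integral_eq_sub_of_hasDerivAt
    · intro t ht; rw [uIcc_of_le hcb.le] at ht; exact hF t ht
    · exact (hint1.sub (hint2.const_mul _)).sub hint3
  have hgb : g b = 0 := by
    simp [hgdef, hωL, Real.cos_pi_div_two]
  have hsplit : ∫ t in (a + ε)..b, ((f' t) ^ 2 - ω ^ 2 * (f t) ^ 2 - (f' t - f t * g t) ^ 2)
      = (∫ t in (a + ε)..b, (f' t) ^ 2) - ω ^ 2 * (∫ t in (a + ε)..b, (f t) ^ 2)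
        - ∫ t in (a + ε)..b, (f' t - f t * g t) ^ 2 := by
    rw [intervalIntegral.integral_sub (hint1.sub (hint2.const_mul _)) hint3,
      intervalIntegral.integral_sub hint1 (hint2.const_mul _),
      intervalIntegral.integral_const_mul]
  have hD : 0 ≤ ∫ t in (a + ε)..b, (f' t - f t * g t) ^ 2 :=
    intervalIntegral.integral_nonneg hcb.le (fun t _ => sq_nonneg _)
  have hca : a + ε - a = ε := by ring
  have hFc : (f (a + ε)) ^ 2 * g (a + ε) ≤ M ^ 2 * ε := by
    have hfc2 : (f (a + ε)) ^ 2 ≤ (M * ε) ^ 2 := by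
      have h1 := hfb (a + ε) ⟨hac.le, hcb.le⟩
      rw [hca] at h1
      nlinarith [abs_nonneg (f (a + ε)), sq_abs (f (a + ε))]
    have hxlt : ω * ε < Real.pi / 2 := by
      have h1 : ω * ε < ω * (b - a) := mul_lt_mul_of_pos_left (by linarith) hω
      rw [hωL] at h1; exact h1
    have hxpos : 0 < ω * ε := mul_pos hω hε0
    have hcos : 0 < Real.cos (ω * ε) :=
      Real.cos_pos_of_mem_Ioo ⟨by nlinarith [Real.pi_pos], hxlt⟩
    have hsin : 0 < Real.sin (ω * ε) :=
      Real.sin_pos_of_pos_of_lt_pi hxpos (by linarith [Real.pi_pos])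
    have hgcpos : 0 ≤ g (a + ε) := by
      rw [hgdef]; simp only [hca]
      exact le_of_lt (mul_pos hω (div_pos hcos hsin))
    have hgcle : g (a + ε) ≤ 1 / ε := by
      have htan := Real.lt_tan hxpos hxlt
      rw [Real.tan_eq_sin_div_cos, lt_div_iff₀ hcos] at htan
      have heq : g (a + ε) = (ω * Real.cos (ω * ε)) / Real.sin (ω * ε) := by
        rw [hgdef]; simp only [hca]; ring
      rw [heq, div_le_div_iff₀ hsin hε0]
      nlinarith
    calc (f (a + ε)) ^ 2 * g (a + ε) ≤ (M * ε) ^ 2 * (1 / ε) :=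
          mul_le_mul hfc2 hgcle hgcpos (by positivity)
      _ = M ^ 2 * ε := by field_simp
  have hstep1 : ω ^ 2 * (∫ t in (a + ε)..b, (f t) ^ 2)
      ≤ (∫ t in (a + ε)..b, (f' t) ^ 2) + M ^ 2 * ε := by
    have h5 := hftc2
    rw [hsplit, hgb] at h5
    nlinarith [hD, hFc]
  have hintac1 : IntervalIntegrable (fun t => (f' t) ^ 2) MeasureTheory.volume a (a + ε) := by
    apply ContinuousOn.intervalIntegrable; rw [uIcc_of_le hac.le]
    exact (hf'.mono (Icc_subset_Icc le_rfl hcb.le)).pow 2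
  have hintac2 : IntervalIntegrable (fun t => (f t) ^ 2) MeasureTheory.volume a (a + ε) := by
    apply ContinuousOn.intervalIntegrable; rw [uIcc_of_le hac.le]
    exact (hcf.mono (Icc_subset_Icc le_rfl hcb.le)).pow 2
  have hadd1 := integral_add_adjacent_intervals hintac1 hint1
  have hadd2 := integral_add_adjacent_intervals hintac2 hint2
  have hpos1 : 0 ≤ ∫ t in a..(a + ε), (f' t) ^ 2 :=
    intervalIntegral.integral_nonneg hac.le (fun t _ => sq_nonneg _)
  have hheadbound : ∫ t in a..(a + ε), (f t) ^ 2 ≤ M ^ 2 * ε ^ 2 * ε := by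
    have hpt : ∀ x ∈ Set.uIoc a (a + ε), ‖(f x) ^ 2‖ ≤ (M * ε) ^ 2 := by
      intro x hx
      rw [uIoc_of_le hac.le] at hx
      have hxab : x ∈ Icc a b := ⟨hx.1.le, le_trans hx.2 hcb.le⟩
      have h4 := hfb x hxab
      have hx2 : x - a ≤ ε := by linarith [hx.2]
      have h5 : |f x| ≤ M * ε := le_trans h4 (by nlinarith [hx.1.le])
      rw [Real.norm_eq_abs, abs_of_nonneg (sq_nonneg _)]
      nlinarith [abs_nonneg (f x), sq_abs (f x)]
    have hb2 := intervalIntegral.norm_integral_le_of_norm_le_const hpt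
    have h3 : |a + ε - a| = ε := by rw [hca, abs_of_pos hε0]
    rw [h3] at hb2
    calc ∫ t in a..(a + ε), (f t) ^ 2 ≤ |∫ t in a..(a + ε), (f t) ^ 2| := le_abs_self _
      _ ≤ (M * ε) ^ 2 * ε := hb2
      _ = M ^ 2 * ε ^ 2 * ε := by ring
  have hεL2 : ε ^ 2 ≤ (b - a) ^ 2 := by nlinarith
  calc ω ^ 2 * ∫ t in a..b, (f t) ^ 2
      = ω ^ 2 * (∫ t in a..(a + ε), (f t) ^ 2) + ω ^ 2 * (∫ t in (a + ε)..b, (f t) ^ 2) := by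
        rw [← hadd2]; ring
    _ ≤ ω ^ 2 * (M ^ 2 * ε ^ 2 * ε) + ((∫ t in (a + ε)..b, (f' t) ^ 2) + M ^ 2 * ε) := by
        have h6 := mul_le_mul_of_nonneg_left hheadbound (sq_nonneg ω)
        linarith [hstep1]
    _ ≤ ((∫ t in a..(a + ε), (f' t) ^ 2) + ∫ t in (a + ε)..b, (f' t) ^ 2)
        + (M ^ 2 + ω ^ 2 * M ^ 2 * (b - a) ^ 2) * ε := by
        nlinarith [mul_le_mul_of_nonneg_left hεL2
          (mul_nonneg (mul_nonneg (sq_nonneg ω) (sq_nonneg M)) hε0.le)]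
    _ = (∫ t in a..b, (f' t) ^ 2) + (M ^ 2 + ω ^ 2 * M ^ 2 * (b - a) ^ 2) * ε := by
        rw [hadd1]

private lemma wirtinger_aux (a b : ℝ) (hab : a < b) (f f' : ℝ → ℝ)
    (hderiv : ∀ t ∈ Set.Icc a b, HasDerivAt f (f' t) t)
    (hf' : ContinuousOn f' (Set.Icc a b))
    (ha : f a = 0) :
    (Real.pi / (2 * (b - a))) ^ 2 * ∫ t in a..b, (f t) ^ 2 ≤ ∫ t in a..b, (f' t) ^ 2 := by
  have hL : 0 < b - a := sub_pos.2 hab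
  have hω : 0 < Real.pi / (2 * (b - a)) := div_pos Real.pi_pos (by linarith)
  have hωL : (Real.pi / (2 * (b - a))) * (b - a) = Real.pi / 2 := by
    field_simp
  have hcf : ContinuousOn f (Icc a b) := fun t ht =>
    (hderiv t ht).continuousAt.continuousWithinAt
  obtain ⟨M0, hM0⟩ := (isCompact_Icc).exists_bound_of_continuousOn hf'
  have hM : (0:ℝ) ≤ max M0 0 := le_max_right _ _
  have hMf' : ∀ t ∈ Icc a b, |f' t| ≤ max M0 0 := fun t ht =>
    le_trans (hM0 t ht) (le_max_left _ _)
  have hfb : ∀ t ∈ Icc a b, |f t| ≤ max M0 0 * (t - a) := by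
    intro t ht
    have hsub : Icc a t ⊆ Icc a b := Icc_subset_Icc le_rfl ht.2
    have hftc : ∫ s in a..t, f' s = f t - f a := by
      apply integral_eq_sub_of_hasDerivAt
      · intro x hx
        rw [uIcc_of_le ht.1] at hx
        exact hderiv x (hsub hx)
      · apply ContinuousOn.intervalIntegrable
        rw [uIcc_of_le ht.1]
        exact hf'.mono hsub
    have hb2 := intervalIntegral.norm_integral_le_of_norm_le_const
      (C := max M0 0) (f := f') (a := a) (b := t) ?_
    · rw [hftc, ha, sub_zero] at hb2
      calc |f t| ≤ max M0 0 * |t - a| := hb2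
        _ = max M0 0 * (t - a) := by rw [abs_of_nonneg (by linarith [ht.1])]
    · intro x hx
      rw [uIoc_of_le ht.1] at hx
      exact hMf' x (hsub ⟨hx.1.le, hx.2⟩)
  have key := fun ε hε => key_eps a b (Real.pi / (2 * (b - a))) (max M0 0) ε hab hω hωL hM
    f f' hderiv hf' hcf hfb hε
  have hlim : Tendsto (fun ε : ℝ => (∫ t in a..b, (f' t) ^ 2) +
      ((max M0 0) ^ 2 + (Real.pi / (2 * (b - a))) ^ 2 * (max M0 0) ^ 2 * (b - a) ^ 2) * ε)
      (𝓝[>] (0:ℝ))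
      (𝓝 ((∫ t in a..b, (f' t) ^ 2) +
      ((max M0 0) ^ 2 + (Real.pi / (2 * (b - a))) ^ 2 * (max M0 0) ^ 2 * (b - a) ^ 2) * 0)) := by
    apply Tendsto.mono_left _ nhdsWithin_le_nhds
    exact (continuous_const.add (continuous_const.mul continuous_id)).tendsto 0
  have h0 : ((∫ t in a..b, (f' t) ^ 2) +
      ((max M0 0) ^ 2 + (Real.pi / (2 * (b - a))) ^ 2 * (max M0 0) ^ 2 * (b - a) ^ 2) * 0)
      = ∫ t in a..b, (f' t) ^ 2 := by ring
  rw [← h0]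
  apply ge_of_tendsto hlim
  filter_upwards [Ioo_mem_nhdsGT_of_mem (Set.mem_Ico.2 ⟨le_rfl, hL⟩)] with ε hε
  exact key ε hε

open Real

/-- Scalar exponential Wirtinger inequality. -/
theorem exp_wirtinger_scalar (a b α : ℝ) (hab : a < b)
    (f f' : ℝ → ℝ)
    (hderiv : ∀ t ∈ Set.Icc a b, HasDerivAt f (f' t) t)
    (hf' : ContinuousOn f' (Set.Icc a b))
    (ha : f a = 0) :
    ∫ t in a..b, Real.exp (2 * α * t) * (f t) ^ 2 ≤
      Real.exp (2 * |α| * (b - a)) * (4 * (b - a) ^ 2 / Real.pi ^ 2) *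
        ∫ t in a..b, Real.exp (2 * α * t) * (f' t) ^ 2 := by
  have hL : 0 < b - a := sub_pos.2 hab
  have hcf : ContinuousOn f (Set.Icc a b) := fun t ht =>
    (hderiv t ht).continuousAt.continuousWithinAt
  have hMm : max (2 * α * a) (2 * α * b) - min (2 * α * a) (2 * α * b)
      = 2 * |α| * (b - a) := by
    rcases abs_cases α with ⟨h1, h2⟩ | ⟨h1, h2⟩
    · rw [max_eq_right (by nlinarith), min_eq_left (by nlinarith), h1]; ring
    · rw [max_eq_left (by nlinarith), min_eq_right (by nlinarith), h1]; ring
  have hbound : ∀ t ∈ Set.Icc a b,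
      min (2 * α * a) (2 * α * b) ≤ 2 * α * t ∧
      2 * α * t ≤ max (2 * α * a) (2 * α * b) := by
    intro t ht
    rcases le_or_gt 0 α with h | h
    · exact ⟨le_trans (min_le_left _ _) (by nlinarith [ht.1]),
        le_trans (by nlinarith [ht.2]) (le_max_right _ _)⟩
    · exact ⟨le_trans (min_le_right _ _) (by nlinarith [ht.2]),
        le_trans (by nlinarith [ht.1]) (le_max_left _ _)⟩
  have hCpos : (0:ℝ) < 4 * (b - a) ^ 2 / Real.pi ^ 2 := by positivity
  have hωC : (Real.pi / (2 * (b - a))) ^ 2 * (4 * (b - a) ^ 2 / Real.pi ^ 2) = 1 := by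
    have := Real.pi_ne_zero
    field_simp
    ring
  have hexpc : Continuous fun t : ℝ => Real.exp (2 * α * t) :=
    Real.continuous_exp.comp (continuous_const.mul continuous_id)
  have hi1 : IntervalIntegrable (fun t => Real.exp (2 * α * t) * (f t) ^ 2)
      MeasureTheory.volume a b := by
    apply ContinuousOn.intervalIntegrable
    rw [Set.uIcc_of_le hab.le]
    exact hexpc.continuousOn.mul (hcf.pow 2)
  have hi2 : IntervalIntegrable (fun t => (f t) ^ 2) MeasureTheory.volume a b := by
    apply ContinuousOn.intervalIntegrable
    rw [Set.uIcc_of_le hab.le]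
    exact hcf.pow 2
  have hi3 : IntervalIntegrable (fun t => (f' t) ^ 2) MeasureTheory.volume a b := by
    apply ContinuousOn.intervalIntegrable
    rw [Set.uIcc_of_le hab.le]
    exact hf'.pow 2
  have hi4 : IntervalIntegrable (fun t => Real.exp (2 * α * t) * (f' t) ^ 2)
      MeasureTheory.volume a b := by
    apply ContinuousOn.intervalIntegrable
    rw [Set.uIcc_of_le hab.le]
    exact hexpc.continuousOn.mul (hf'.pow 2)
  have step1 : (∫ t in a..b, Real.exp (2 * α * t) * (f t) ^ 2)
      ≤ Real.exp (max (2 * α * a) (2 * α * b)) * ∫ t in a..b, (f t) ^ 2 := by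
    rw [← intervalIntegral.integral_const_mul]
    apply intervalIntegral.integral_mono_on hab.le hi1 (hi2.const_mul _)
    intro t ht
    have h1 : Real.exp (2 * α * t) ≤ Real.exp (max (2 * α * a) (2 * α * b)) :=
      Real.exp_le_exp.2 (hbound t ht).2
    nlinarith [sq_nonneg (f t), Real.exp_pos (2 * α * t)]
  have step2 : (∫ t in a..b, (f t) ^ 2)
      ≤ (4 * (b - a) ^ 2 / Real.pi ^ 2) * ∫ t in a..b, (f' t) ^ 2 := by
    have hw := wirtinger_aux a b hab f f' hderiv hf' ha
    have hfnn : 0 ≤ ∫ t in a..b, (f t) ^ 2 :=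
      intervalIntegral.integral_nonneg hab.le (fun t _ => sq_nonneg _)
    nlinarith [hωC, hCpos, mul_le_mul_of_nonneg_left hw hCpos.le]
  have step3 : Real.exp (min (2 * α * a) (2 * α * b)) * (∫ t in a..b, (f' t) ^ 2)
      ≤ ∫ t in a..b, Real.exp (2 * α * t) * (f' t) ^ 2 := by
    rw [← intervalIntegral.integral_const_mul]
    apply intervalIntegral.integral_mono_on hab.le (hi3.const_mul _) hi4
    intro t ht
    have h1 : Real.exp (min (2 * α * a) (2 * α * b)) ≤ Real.exp (2 * α * t) :=
      Real.exp_le_exp.2 (hbound t ht).1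
    nlinarith [sq_nonneg (f' t), Real.exp_pos (min (2 * α * a) (2 * α * b))]
  have hexpeq : Real.exp (max (2 * α * a) (2 * α * b))
      = Real.exp (2 * |α| * (b - a)) * Real.exp (min (2 * α * a) (2 * α * b)) := by
    rw [← Real.exp_add, ← hMm]; ring_nf
  calc ∫ t in a..b, Real.exp (2 * α * t) * (f t) ^ 2
      ≤ Real.exp (max (2 * α * a) (2 * α * b)) * ∫ t in a..b, (f t) ^ 2 := step1
    _ ≤ Real.exp (max (2 * α * a) (2 * α * b)) *
        ((4 * (b - a) ^ 2 / Real.pi ^ 2) * ∫ t in a..b, (f' t) ^ 2) :=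
        mul_le_mul_of_nonneg_left step2 (Real.exp_pos _).le
    _ = Real.exp (2 * |α| * (b - a)) * (4 * (b - a) ^ 2 / Real.pi ^ 2) *
        (Real.exp (min (2 * α * a) (2 * α * b)) * ∫ t in a..b, (f' t) ^ 2) := by
        rw [hexpeq]; ring
    _ ≤ Real.exp (2 * |α| * (b - a)) * (4 * (b - a) ^ 2 / Real.pi ^ 2) *
        ∫ t in a..b, Real.exp (2 * α * t) * (f' t) ^ 2 := by
        apply mul_le_mul_of_nonneg_left step3
        positivity
end
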